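/- Let P be a non-obtuse hyperbolic polyhedron (all dihedral angles ≤ π/2), and let F₁, F₂ be faces with defining planes Π₁, Π₂. Then the closures of F₁ and F₂ intersect in the closure of H³ if and only if the closures of Π₁ and Π₂ intersect. -/

import Mathlib

open Real

namespace Aux14

variable {F : Type*} [NormedAddCommGroup F] [InnerProductSpace ℝ F]

local notation "⟪" x ", " y "⟫" => @inner ℝ _ _ x y

/-- Minkowski bilinear form on `F × ℝ`. -/
noncomputable def MB (X Y : F × ℝ) : ℝ := ⟪X.1, Y.1⟫ - X.2 * Y.2

@[simp] lemma MB_mk (x y : F) (s t : ℝ) : MB (x, s) (y, t) = ⟪x, y⟫ - s * t := rfl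

lemma MB_comm (X Y : F × ℝ) : MB X Y = MB Y X := by
  simp [MB, real_inner_comm]; ring

lemma MB_add_left (X Y Z : F × ℝ) : MB (X + Y) Z = MB X Z + MB Y Z := by
  simp [MB, inner_add_left]; ring

lemma MB_smul_left (r : ℝ) (X Z : F × ℝ) : MB (r • X) Z = r * MB X Z := by
  simp [MB, real_inner_smul_left]; ring

lemma MB_sub_left (X Y Z : F × ℝ) : MB (X - Y) Z = MB X Z - MB Y Z := by
  simp [MB, inner_sub_left]; ring

lemma MB_add_right (X Y Z : F × ℝ) : MB X (Y + Z) = MB X Y + MB X Z := by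
  rw [MB_comm, MB_add_left, MB_comm Y X, MB_comm Z X]

lemma MB_smul_right (r : ℝ) (X Z : F × ℝ) : MB X (r • Z) = r * MB X Z := by
  rw [MB_comm, MB_smul_left, MB_comm]

lemma MB_sub_right (X Y Z : F × ℝ) : MB X (Y - Z) = MB X Y - MB X Z := by
  rw [MB_comm, MB_sub_left, MB_comm Y X, MB_comm Z X]

lemma MB_posdef {T X : F × ℝ} (hT : MB T T < 0) (hperp : MB T X = 0) :
    0 ≤ MB X X ∧ (MB X X = 0 → X = 0) := by
  obtain ⟨t, s⟩ := T
  obtain ⟨x, r⟩ := X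
  simp only [MB] at hT hperp ⊢
  have htt : ⟪t, t⟫ = ‖t‖^2 := real_inner_self_eq_norm_sq t
  have hxx : ⟪x, x⟫ = ‖x‖^2 := real_inner_self_eq_norm_sq x
  have hCS : ⟪t, x⟫ * ⟪t, x⟫ ≤ ⟪t, t⟫ * ⟪x, x⟫ := real_inner_mul_inner_self_le t x
  have hs2 : ‖t‖^2 < s * s := by nlinarith
  have hss2 : 0 < s * s := by nlinarith [sq_nonneg (‖t‖)]
  have hx0 : 0 ≤ ‖x‖^2 := sq_nonneg _
  have hperp' : (⟪t, x⟫:ℝ) = s * r := by linarith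
  have hsr : (s*r)*(s*r) ≤ ‖t‖^2 * ‖x‖^2 := by rw [hperp', htt, hxx] at hCS; exact hCS
  have hprod : 0 ≤ (s*s - ‖t‖^2) * ‖x‖^2 := mul_nonneg (by linarith) hx0
  have key : 0 ≤ ⟪x, x⟫ - r * r := by nlinarith [hsr, hprod, hss2]
  refine ⟨key, fun h0 => ?_⟩
  have hxz : ‖x‖^2 ≤ 0 := by nlinarith [hsr, hss2]
  have hx : x = 0 := by
    have : ‖x‖ = 0 := by nlinarith [norm_nonneg x]
    exact norm_eq_zero.mp this
  have hr : r = 0 := by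
    subst hx
    simp only [inner_zero_right] at hperp
    simp only [inner_zero_right, norm_zero] at h0 hxx ⊢
    nlinarith [h0, hxx]
  simp [hx, hr, Prod.ext_iff]

lemma MB_revCS {T X : F × ℝ} (hT : MB T T < 0) :
    MB T T * MB X X ≤ (MB T X)^2 ∧
      ((MB T X)^2 = MB T T * MB X X → X = (MB T X / MB T T) • T) := by
  have hTT : MB T T ≠ 0 := ne_of_lt hT
  set γ : ℝ := MB T X / MB T T with hγ
  have hγT : γ * MB T T = MB T X := div_mul_cancel₀ _ hTT
  set Z : F × ℝ := X - γ • T with hZ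
  have hTZ : MB T Z = 0 := by
    rw [hZ, MB_sub_right, MB_smul_right, hγ]
    field_simp
    ring
  have hX : X = Z + γ • T := by rw [hZ]; abel
  have hXX : MB X X = MB Z Z + γ^2 * MB T T := by
    have h1 : MB X X = MB (Z + γ • T) (Z + γ • T) := by rw [← hX]
    rw [h1, MB_add_left, MB_add_right, MB_add_right, MB_smul_right, MB_smul_left,
      MB_smul_left, MB_smul_right, MB_comm Z T, hTZ]
    ring
  have hZZ : 0 ≤ MB Z Z := (MB_posdef hT hTZ).1
  have hTX2 : (MB T X)^2 = γ^2 * (MB T T)^2 := by rw [← hγT]; ring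
  have h5 : MB T T * MB X X = MB T T * MB Z Z + γ^2 * (MB T T)^2 := by rw [hXX]; ring
  have hneg : 0 ≤ (-MB T T) * MB Z Z := mul_nonneg (by linarith) hZZ
  constructor
  · nlinarith [h5, hTX2, hneg]
  · intro heq
    have h4 : MB T T * MB Z Z = 0 := by linarith [heq, hTX2, h5]
    have hz0 : MB Z Z = 0 := by
      rcases mul_eq_zero.mp h4 with h | h
      · exact absurd h hTT
      · exact h
    have : Z = 0 := (MB_posdef hT hTZ).2 hz0
    rw [hX, this, zero_add, hγ]

lemma MB_same_cone {T S : F × ℝ} (hT : MB T T < 0) (hS : MB S S < 0) (hTS : MB T S < 0) :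
    0 < T.2 * S.2 := by
  obtain ⟨t, s⟩ := T
  obtain ⟨u, r⟩ := S
  simp only [MB] at hT hS hTS ⊢
  have hCS : ⟪t, u⟫ * ⟪t, u⟫ ≤ ⟪t, t⟫ * ⟪u, u⟫ := real_inner_mul_inner_self_le t u
  have h1 : 0 ≤ ⟪t, t⟫ := real_inner_self_nonneg
  have h2 : 0 ≤ ⟪u, u⟫ := real_inner_self_nonneg
  by_contra h
  push_neg at h
  nlinarith



set_option maxHeartbeats 1000000 in
lemma foot_lemma {ι : Type*} [Fintype ι]
    (n : ι → F) (c : ι → ℝ) (hn : ∀ f, ‖n f‖ = 1) (hc : ∀ f, |c f| < 1)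
    (P : Set F) (hP : P = {x | ‖x‖ < 1 ∧ ∀ f, ⟪n f, x⟫ ≤ c f})
    (Face : ι → Set F) (hFace : ∀ f, Face f = {x ∈ P | ⟪n f, x⟫ = c f})
    (f : ι) (x₀ : F) (hx₀ : x₀ ∈ Face f)
    (hnob : ∀ g, f ≠ g → (Face f ∩ Face g).Nonempty → ⟪n f, n g⟫ ≤ c f * c g)
    (b : F) (hb : ‖b‖ < 1) (hbg : ∀ g, ⟪n g, b⟫ ≤ c g) :
    ∃ (p : F) (κ τ : ℝ), p ∈ Face f ∧ 0 < τ ∧ κ ≤ 0 ∧ τ = 1 - κ * c f ∧ τ • p = b - κ • n f := by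
  classical
  rw [hFace f, hP] at hx₀
  obtain ⟨⟨hx₀n, hx₀g⟩, hx₀f⟩ := hx₀
  have hcf2 : 0 < 1 - c f ^ 2 := by
    have := hc f
    rw [abs_lt] at this
    nlinarith
  obtain ⟨κ, hκeq⟩ : ∃ κ : ℝ, κ * (1 - c f ^ 2) = ⟪n f, b⟫ - c f :=
    ⟨_, div_mul_cancel₀ _ (ne_of_gt hcf2)⟩
  have hκ : κ ≤ 0 := by nlinarith [hcf2, hbg f]
  set τ : ℝ := 1 - κ * c f with hτdef
  set w : F := b - κ • n f with hwdef
  have hb2 : ‖b‖ ^ 2 < 1 := by nlinarith [norm_nonneg b]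
  have h1 : ‖w‖ ^ 2 = ‖b‖ ^ 2 - 2 * (κ * ⟪n f, b⟫) + κ ^ 2 := by
    rw [hwdef, @norm_sub_sq_real, real_inner_smul_right, norm_smul, hn f,
      real_inner_comm (n f) b]
    simp only [Real.norm_eq_abs, mul_one, sq_abs]
  have h2 : κ * (⟪n f, b⟫ - c f) = κ ^ 2 * (1 - c f ^ 2) := by rw [← hκeq]; ring
  have hτ2 : τ ^ 2 = 1 - 2 * (κ * c f) + κ ^ 2 * c f ^ 2 := by rw [hτdef]; ring
  have key : ‖w‖ ^ 2 < τ ^ 2 := by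
    nlinarith [h1, h2, hτ2, hb2, mul_nonneg (sq_nonneg κ) hcf2.le]
  have hx₀b : ⟪x₀, b⟫ < 1 := by
    nlinarith [real_inner_le_norm x₀ b, norm_nonneg b, hx₀n, hb]
  have hA1 : MB ((x₀, 1) : F × ℝ) ((x₀, 1) : F × ℝ) < 0 := by
    rw [MB_mk]
    nlinarith [real_inner_self_eq_norm_sq x₀, hx₀n, norm_nonneg x₀]
  have hS1 : MB ((w, τ) : F × ℝ) ((w, τ) : F × ℝ) < 0 := by
    rw [MB_mk]
    nlinarith [real_inner_self_eq_norm_sq w, key]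
  have hAS : MB ((x₀, 1) : F × ℝ) ((w, τ) : F × ℝ) < 0 := by
    rw [MB_mk]
    have hxw : ⟪x₀, w⟫ = ⟪x₀, b⟫ - κ * c f := by
      rw [hwdef, inner_sub_right, real_inner_smul_right, real_inner_comm (n f) x₀, hx₀f]
    rw [hxw, hτdef]
    linarith
  have hτpos : 0 < τ := by
    have hcone := MB_same_cone hA1 hS1 hAS
    simpa using hcone
  have hτne : τ ≠ 0 := ne_of_gt hτpos
  obtain ⟨p, hτp⟩ : ∃ p : F, τ • p = w := ⟨τ⁻¹ • w, smul_inv_smul₀ hτne w⟩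
  have hwnorm : ‖w‖ < τ := by nlinarith [norm_nonneg w, key, hτpos]
  have h3 : τ * ‖p‖ = ‖w‖ := by
    rw [← hτp, norm_smul, Real.norm_eq_abs, abs_of_pos hτpos]
  have hpn : ‖p‖ < 1 := by nlinarith [h3, hwnorm, hτpos, norm_nonneg p]
  have hinw : ∀ g, τ * ⟪n g, p⟫ = ⟪n g, b⟫ - κ * ⟪n f, n g⟫ := by
    intro g
    have h4 : ⟪n g, w⟫ = τ * ⟪n g, p⟫ := by
      rw [← hτp]; exact real_inner_smul_right (n g) p τ
    rw [← h4, hwdef, inner_sub_right, real_inner_smul_right, real_inner_comm (n f) (n g)]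
  have hpf : ⟪n f, p⟫ = c f := by
    have h6 : τ * ⟪n f, p⟫ = τ * c f := by
      rw [hinw f, real_inner_self_eq_norm_sq, hn f, hτdef]
      nlinarith [hκeq]
    exact mul_left_cancel₀ hτne h6
  have hpg : ∀ g, ⟪n g, p⟫ ≤ c g := by
    by_contra hcon
    push_neg at hcon
    obtain ⟨g₀, hg₀⟩ := hcon
    set T' : Finset ι := Finset.univ.filter (fun g => c g < ⟪n g, p⟫) with hT'
    have hT'ne : T'.Nonempty := ⟨g₀, by simp [hT', hg₀]⟩
    set tt : ι → ℝ := fun g => (c g - ⟪n g, x₀⟫) / (⟪n g, p⟫ - ⟪n g, x₀⟫) with htt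
    obtain ⟨gs, hgsT, hgsmin⟩ := T'.exists_min_image tt hT'ne
    have hgs : c gs < ⟪n gs, p⟫ := (Finset.mem_filter.mp hgsT).2
    have hdgs : 0 < ⟪n gs, p⟫ - ⟪n gs, x₀⟫ := by linarith [hx₀g gs]
    set s : ℝ := tt gs with hs
    have hseq : ⟪n gs, x₀⟫ + s * (⟪n gs, p⟫ - ⟪n gs, x₀⟫) = c gs := by
      rw [hs, htt]
      simp only []
      rw [div_mul_cancel₀ _ (ne_of_gt hdgs)]
      ring
    have hs0 : 0 ≤ s := by
      rw [hs, htt]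
      exact div_nonneg (by linarith [hx₀g gs]) hdgs.le
    have hs1 : s < 1 := by
      rw [hs, htt]
      rw [div_lt_one hdgs]
      linarith
    set z : F := x₀ + s • (p - x₀) with hz
    have hinz : ∀ g, ⟪n g, z⟫ = ⟪n g, x₀⟫ + s * (⟪n g, p⟫ - ⟪n g, x₀⟫) := by
      intro g
      rw [hz, inner_add_right, real_inner_smul_right, inner_sub_right]
    have hzn : ‖z‖ < 1 := by
      have hzeq : z = (1 - s) • x₀ + s • p := by rw [hz]; module
      have h7 : ‖z‖ ≤ (1 - s) * ‖x₀‖ + s * ‖p‖ := by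
        rw [hzeq]
        calc ‖(1 - s) • x₀ + s • p‖ ≤ ‖(1 - s) • x₀‖ + ‖s • p‖ := norm_add_le _ _
        _ = (1 - s) * ‖x₀‖ + s * ‖p‖ := by
            rw [norm_smul, norm_smul, Real.norm_eq_abs, Real.norm_eq_abs,
              abs_of_nonneg hs0, abs_of_nonneg (by linarith : (0:ℝ) ≤ 1 - s)]
      nlinarith [norm_nonneg x₀, norm_nonneg p]
    have hzg : ∀ g, ⟪n g, z⟫ ≤ c g := by
      intro g
      by_cases hgT : g ∈ T'
      · have hg : c g < ⟪n g, p⟫ := (Finset.mem_filter.mp hgT).2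
        have hd : 0 < ⟪n g, p⟫ - ⟪n g, x₀⟫ := by linarith [hx₀g g]
        have hsle : s ≤ tt g := hgsmin g hgT
        have hteq : ⟪n g, x₀⟫ + tt g * (⟪n g, p⟫ - ⟪n g, x₀⟫) = c g := by
          rw [htt]
          simp only []
          rw [div_mul_cancel₀ _ (ne_of_gt hd)]
          ring
        have := mul_le_mul_of_nonneg_right hsle hd.le
        rw [hinz g]
        linarith
      · have hg : ⟪n g, p⟫ ≤ c g := by
          by_contra hgg
          exact hgT (Finset.mem_filter.mpr ⟨Finset.mem_univ g, not_le.mp hgg⟩)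
        rw [hinz g]
        nlinarith [mul_nonneg (by linarith : (0:ℝ) ≤ 1 - s)
            (by linarith [hx₀g g] : (0:ℝ) ≤ c g - ⟪n g, x₀⟫),
          mul_nonneg hs0 (by linarith : (0:ℝ) ≤ c g - ⟪n g, p⟫), hx₀g g]
    have hzP : z ∈ P := by rw [hP]; exact ⟨hzn, hzg⟩
    have hzf : ⟪n f, z⟫ = c f := by
      rw [hinz f, hx₀f, hpf]
      ring
    have hfgs : f ≠ gs := by
      intro hfg
      rw [← hfg, hpf] at hgs
      exact lt_irrefl _ hgs
    have hzFf : z ∈ Face f := by rw [hFace]; exact ⟨hzP, hzf⟩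
    have hzFgs : z ∈ Face gs := by
      rw [hFace]
      refine ⟨hzP, ?_⟩
      rw [hinz gs]
      exact hseq
    have hnb : ⟪n f, n gs⟫ ≤ c f * c gs := hnob gs hfgs ⟨z, hzFf, hzFgs⟩
    have h9 : 0 ≤ κ * (⟪n f, n gs⟫ - c f * c gs) := by
      nlinarith [mul_nonneg (neg_nonneg.mpr hκ) (sub_nonneg.mpr hnb)]
    have h10 : τ * ⟪n gs, p⟫ ≤ τ * c gs := by
      rw [hinw gs, hτdef]
      nlinarith [hbg gs, h9]
    have hfinal : ⟪n gs, p⟫ ≤ c gs := le_of_mul_le_mul_left h10 hτpos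
    linarith
  refine ⟨p, κ, τ, ?_, hτpos, hκ, hτdef, hτp⟩
  rw [hFace, hP]
  exact ⟨⟨hpn, hpg⟩, hpf⟩



set_option maxHeartbeats 1000000 in
lemma opt_foot {ι : Type*} [Fintype ι]
    (n : ι → F) (c : ι → ℝ) (hn : ∀ f, ‖n f‖ = 1) (hc : ∀ f, |c f| < 1)
    (P : Set F) (hP : P = {x | ‖x‖ < 1 ∧ ∀ f, ⟪n f, x⟫ ≤ c f})
    (Face : ι → Set F) (hFace : ∀ f, Face f = {x ∈ P | ⟪n f, x⟫ = c f})
    (f : ι) (x₀ : F) (hx₀ : x₀ ∈ Face f)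
    (hnob : ∀ g, f ≠ g → (Face f ∩ Face g).Nonempty → ⟪n f, n g⟫ ≤ c f * c g)
    (a b : F) (ha1 : ‖a‖ < 1) (ha2 : ⟪n f, a⟫ = c f)
    (hb1 : ‖b‖ < 1) (hb2 : ∀ g, ⟪n g, b⟫ ≤ c g)
    (hmax : ∀ x ∈ Face f,
      (1 - ‖x‖^2) * (1 - ‖b‖^2) / (1 - ⟪x, b⟫)^2 ≤
        (1 - ‖a‖^2) * (1 - ‖b‖^2) / (1 - ⟪a, b⟫)^2) :
    ∃ τ κ : ℝ, 0 < τ ∧ κ ≤ 0 ∧ τ + κ * c f = 1 ∧ b = τ • a + κ • n f := by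
  obtain ⟨p, κ, τ, hpF, hτpos, hκ, hτdef, hτp⟩ :=
    foot_lemma n c hn hc P hP Face hFace f x₀ hx₀ hnob b hb1 hb2
  have hpF' := hpF
  rw [hFace, hP] at hpF'
  obtain ⟨⟨hpn, hpg⟩, hpf⟩ := hpF'
  have hsum : τ + κ * c f = 1 := by rw [hτdef]; ring
  have h1 : τ • p + κ • n f = b := by rw [hτp]; abel
  have hBdec : ((b, 1) : F × ℝ) = τ • ((p, 1) : F × ℝ) + κ • ((n f, c f) : F × ℝ) := by
    apply Prod.ext
    · simp only [Prod.fst_add, Prod.smul_fst]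
      exact h1.symm
    · simp only [Prod.snd_add, Prod.smul_snd, smul_eq_mul, mul_one]
      linarith
  have hMA : MB ((a, 1) : F × ℝ) ((a, 1) : F × ℝ) < 0 := by
    rw [MB_mk]
    nlinarith [real_inner_self_eq_norm_sq a, ha1, norm_nonneg a]
  have hMPs : MB ((p, 1) : F × ℝ) ((p, 1) : F × ℝ) < 0 := by
    rw [MB_mk]
    nlinarith [real_inner_self_eq_norm_sq p, hpn, norm_nonneg p]
  have hUPs : MB (((n f, c f)) : F × ℝ) ((p, 1) : F × ℝ) = 0 := by
    rw [MB_mk]; rw [hpf]; ring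
  have hUA : MB (((n f, c f)) : F × ℝ) ((a, 1) : F × ℝ) = 0 := by
    rw [MB_mk]; rw [ha2]; ring
  have hPsB : MB ((p, 1) : F × ℝ) ((b, 1) : F × ℝ) = τ * MB ((p, 1) : F × ℝ) ((p, 1) : F × ℝ) := by
    rw [hBdec, MB_add_right, MB_smul_right, MB_smul_right, MB_comm _ ((n f, c f) : F × ℝ), hUPs]
    ring
  have hAB : MB ((a, 1) : F × ℝ) ((b, 1) : F × ℝ) = τ * MB ((a, 1) : F × ℝ) ((p, 1) : F × ℝ) := by
    rw [hBdec, MB_add_right, MB_smul_right, MB_smul_right, MB_comm _ ((n f, c f) : F × ℝ), hUA]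
    ring
  -- scalar abbreviations
  have hα : 0 < 1 - ‖a‖^2 := by nlinarith [norm_nonneg a]
  have hβ : 0 < 1 - ‖b‖^2 := by nlinarith [norm_nonneg b]
  have hπ : 0 < 1 - ‖p‖^2 := by nlinarith [norm_nonneg p]
  have hσ : 0 < 1 - ⟪a, p⟫ := by
    nlinarith [real_inner_le_norm a p, norm_nonneg a, norm_nonneg p]
  have hPsB' : (⟪p, b⟫ : ℝ) - 1 = τ * (‖p‖^2 - 1) := by
    have h := hPsB
    rw [MB_mk, MB_mk, real_inner_self_eq_norm_sq] at h
    linear_combination h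
  have hAB' : (⟪a, b⟫ : ℝ) - 1 = τ * (⟪a, p⟫ - 1) := by
    have h := hAB
    rw [MB_mk, MB_mk] at h
    linear_combination h
  have e1 : (1 : ℝ) - ⟪p, b⟫ = τ * (1 - ‖p‖^2) := by linear_combination -hPsB'
  have e2 : (1 : ℝ) - ⟪a, b⟫ = τ * (1 - ⟪a, p⟫) := by linear_combination -hAB'
  have hineq := hmax p hpF
  rw [e1, e2] at hineq
  have hd1 : (0:ℝ) < (τ * (1 - ‖p‖^2))^2 := pow_pos (mul_pos hτpos hπ) 2
  have hd2 : (0:ℝ) < (τ * (1 - ⟪a, p⟫))^2 := pow_pos (mul_pos hτpos hσ) 2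
  have hcross := (div_le_div_iff₀ hd1 hd2).mp hineq
  have hs2le : (1 - ⟪a, p⟫)^2 ≤ (1 - ‖a‖^2) * (1 - ‖p‖^2) := by
    nlinarith [hcross, mul_pos (mul_pos hβ hπ) (mul_pos hτpos hτpos), hβ, hπ, hτpos]
  obtain ⟨hCSineq, hCSeq⟩ := MB_revCS (T := ((p, 1) : F × ℝ)) (X := ((a, 1) : F × ℝ)) hMPs
  have hCSval : (1 - ‖a‖^2) * (1 - ‖p‖^2) ≤ (1 - ⟪a, p⟫)^2 := by
    rw [MB_mk, MB_mk, MB_mk, real_inner_self_eq_norm_sq, real_inner_self_eq_norm_sq,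
      real_inner_comm a p] at hCSineq
    nlinarith [hCSineq]
  have heq : (MB ((p,1) : F × ℝ) ((a,1) : F × ℝ))^2
      = MB ((p,1) : F × ℝ) ((p,1) : F × ℝ) * MB ((a,1) : F × ℝ) ((a,1) : F × ℝ) := by
    rw [MB_mk, MB_mk, MB_mk, real_inner_self_eq_norm_sq, real_inner_self_eq_norm_sq,
      real_inner_comm a p]
    nlinarith [le_antisymm hs2le hCSval]
  have hA_eq := hCSeq heq
  have hγ1 : (1 : ℝ) = (MB ((p,1) : F × ℝ) ((a,1) : F × ℝ) / MB ((p,1) : F × ℝ) ((p,1) : F × ℝ)) := by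
    have h2 := congrArg Prod.snd hA_eq
    simpa using h2
  have hap : a = p := by
    have h3 := congrArg Prod.fst hA_eq
    simp only [Prod.smul_fst] at h3
    rw [← hγ1] at h3
    simpa using h3
  refine ⟨τ, κ, hτpos, hκ, hsum, ?_⟩
  rw [hap]
  exact h1.symm

end Aux14


local notation "E" => EuclideanSpace ℝ (Fin 3)

open Aux14

set_option maxHeartbeats 1000000

/-- We work in the Klein (projective) model of `H³`: the open unit ball in `ℝ³`,
in which geodesic planes are intersections of the ball with Euclidean planes
`{x | ⟪n, x⟫ = c}` (`‖n‖ = 1`, `|c| < 1`), and closures in the compactification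
`H³ ∪ ∂H³` correspond to Euclidean closures in the closed unit ball.
A polyhedron is the intersection of the half-spaces `⟪n f, x⟫ ≤ c f` with the
open ball.  The dihedral angle between the intersecting faces `f`, `g` is
non-obtuse (lies in `(0, π/2]`) precisely when the Minkowski inner product of the
outward normals is `≤ 0`, i.e. `⟪n f, n g⟫ ≤ c f · c g`.

Statement: for a non-obtuse hyperbolic polyhedron, the closures of two faces
intersect iff the closures of their defining planes intersect. -/
theorem stmt14 {ι : Type*} [Fintype ι]
    (n : ι → EuclideanSpace ℝ (Fin 3)) (c : ι → ℝ)
    (hn : ∀ f, ‖n f‖ = 1) (hc : ∀ f, |c f| < 1)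
    (P : Set (EuclideanSpace ℝ (Fin 3)))
    (hP : P = {x | ‖x‖ < 1 ∧ ∀ f, (inner ℝ (n f) x : ℝ) ≤ c f})
    (hPint : (interior P).Nonempty)
    (Face : ι → Set (EuclideanSpace ℝ (Fin 3)))
    (hFace : ∀ f, Face f = {x ∈ P | (inner ℝ (n f) x : ℝ) = c f})
    (hface_ne : ∀ f, (Face f).Nonempty)
    (Plane : ι → Set (EuclideanSpace ℝ (Fin 3)))
    (hPlane : ∀ f, Plane f = {x | ‖x‖ < 1 ∧ (inner ℝ (n f) x : ℝ) = c f})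
    (hnonobtuse : ∀ f g, f ≠ g → (Face f ∩ Face g).Nonempty →
      (inner ℝ (n f) (n g) : ℝ) ≤ c f * c g)
    (f₁ f₂ : ι) (hf : f₁ ≠ f₂) :
    (closure (Face f₁) ∩ closure (Face f₂)).Nonempty ↔
      (closure (Plane f₁) ∩ closure (Plane f₂)).Nonempty := by
  classical
  constructor
  · rintro ⟨x, hx1, hx2⟩
    have hsub : ∀ g, Face g ⊆ Plane g := by
      intro g y hy
      rw [hFace, hP] at hy
      rw [hPlane]
      exact ⟨hy.1.1, hy.2⟩
    exact ⟨x, closure_mono (hsub f₁) hx1, closure_mono (hsub f₂) hx2⟩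
  · rintro ⟨y, hy1, hy2⟩
    have hplcl : ∀ g, closure (Plane g) ⊆ {x : E | ‖x‖ ≤ 1 ∧ (inner ℝ (n g) x : ℝ) = c g} := by
      intro g
      apply closure_minimal
      · intro x hx
        rw [hPlane] at hx
        exact ⟨hx.1.le, hx.2⟩
      · have : {x : E | ‖x‖ ≤ 1 ∧ (inner ℝ (n g) x : ℝ) = c g}
            = {x : E | ‖x‖ ≤ 1} ∩ {x : E | (inner ℝ (n g) x : ℝ) = c g} := rfl
        rw [this]
        exact (isClosed_le continuous_norm continuous_const).inter
          (isClosed_eq (continuous_const.inner continuous_id) continuous_const)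
    obtain ⟨hyn, hye1⟩ := hplcl f₁ hy1
    obtain ⟨-, hye2⟩ := hplcl f₂ hy2
    by_cases hdep : ∃ γ : ℝ, n f₂ = γ • n f₁ ∧ c f₂ = γ * c f₁
    · obtain ⟨γ, hnγ, hcγ⟩ := hdep
      obtain ⟨x₁, hx₁F⟩ := hface_ne f₁
      have hx₁' := hx₁F
      rw [hFace] at hx₁'
      have hx₁2 : x₁ ∈ Face f₂ := by
        rw [hFace]
        refine ⟨hx₁'.1, ?_⟩
        rw [hnγ, hcγ, real_inner_smul_left, hx₁'.2]
      exact ⟨x₁, subset_closure hx₁F, subset_closure hx₁2⟩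
    · by_contra hcon
      have hKsub : ∀ g, closure (Face g) ⊆
          {x : E | ‖x‖ ≤ 1 ∧ (∀ h, (inner ℝ (n h) x : ℝ) ≤ c h) ∧ (inner ℝ (n g) x : ℝ) = c g} := by
        intro g
        apply closure_minimal
        · intro x hx
          rw [hFace, hP] at hx
          exact ⟨hx.1.1.le, hx.1.2, hx.2⟩
        · have : {x : E | ‖x‖ ≤ 1 ∧ (∀ h, (inner ℝ (n h) x : ℝ) ≤ c h) ∧ (inner ℝ (n g) x : ℝ) = c g}
              = {x : E | ‖x‖ ≤ 1} ∩ ({x : E | ∀ h, (inner ℝ (n h) x : ℝ) ≤ c h}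
                ∩ {x : E | (inner ℝ (n g) x : ℝ) = c g}) := rfl
          rw [this]
          refine (isClosed_le continuous_norm continuous_const).inter (IsClosed.inter ?_ ?_)
          · have : {x : E | ∀ h, (inner ℝ (n h) x : ℝ) ≤ c h}
                = ⋂ h, {x : E | (inner ℝ (n h) x : ℝ) ≤ c h} := by
              ext x; simp
            rw [this]
            exact isClosed_iInter fun h =>
              isClosed_le (continuous_const.inner continuous_id) continuous_const
          · exact isClosed_eq (continuous_const.inner continuous_id) continuous_const
      have hdisj : ∀ x ∈ closure (Face f₁), ∀ z ∈ closure (Face f₂), (inner ℝ x z : ℝ) < 1 := by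
        intro x hx z hz
        obtain ⟨hxn, -, -⟩ := hKsub f₁ hx
        obtain ⟨hzn, -, -⟩ := hKsub f₂ hz
        by_contra hle
        push_neg at hle
        have hCS := real_inner_le_norm x z
        have h1 : ‖x‖ = 1 := by nlinarith [norm_nonneg x, norm_nonneg z]
        have h2 : ‖z‖ = 1 := by nlinarith [norm_nonneg x, norm_nonneg z]
        have h3 : x = z := by
          have h4 : ‖x - z‖^2 = 0 := by
            rw [@norm_sub_sq_real]
            nlinarith
          have h5 : ‖x - z‖ = 0 := by
            nlinarith [norm_nonneg (x - z)]
          rw [norm_eq_zero, sub_eq_zero] at h5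
          exact h5
        exact hcon ⟨x, hx, h3 ▸ hz⟩
      have hKcpt : ∀ g, IsCompact (closure (Face g)) := by
        intro g
        apply IsCompact.of_isClosed_subset (isCompact_closedBall (0:E) 1) isClosed_closure
        apply closure_minimal ?_ Metric.isClosed_closedBall
        intro x hx
        rw [hFace, hP] at hx
        rw [mem_closedBall_zero_iff]
        exact hx.1.1.le
      obtain ⟨x₁, hx₁F⟩ := hface_ne f₁
      obtain ⟨x₂, hx₂F⟩ := hface_ne f₂
      have hx₁' := hx₁F; rw [hFace, hP] at hx₁'
      have hx₂' := hx₂F; rw [hFace, hP] at hx₂'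
      have hGcont : ContinuousOn
          (fun q : E × E => (1 - ‖q.1‖^2) * (1 - ‖q.2‖^2) / (1 - (inner ℝ q.1 q.2 : ℝ))^2)
          ((closure (Face f₁)) ×ˢ (closure (Face f₂))) := by
        apply ContinuousOn.div
        · fun_prop
        · have hic : Continuous (fun q : E × E => (inner ℝ q.1 q.2 : ℝ)) := continuous_inner
          fun_prop
        · rintro ⟨x, z⟩ ⟨hx, hz⟩
          have := hdisj x hx z hz
          exact pow_ne_zero 2 (by linarith)
      obtain ⟨ab, habmem, hmax⟩ := ((hKcpt f₁).prod (hKcpt f₂)).exists_isMaxOn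
        ⟨(x₁, x₂), Set.mem_prod.mpr ⟨subset_closure hx₁F, subset_closure hx₂F⟩⟩ hGcont
      obtain ⟨a, b⟩ := ab
      rw [isMaxOn_iff] at hmax
      obtain ⟨haK, hbK⟩ := Set.mem_prod.mp habmem
      simp only at haK hbK
      obtain ⟨han, haall, hae⟩ := hKsub f₁ haK
      obtain ⟨hbn, hball, hbe⟩ := hKsub f₂ hbK
      have hdab : (inner ℝ a b : ℝ) < 1 := hdisj a haK b hbK
      have hG0 : (0:ℝ) < (1 - ‖x₁‖^2) * (1 - ‖x₂‖^2) / (1 - (inner ℝ x₁ x₂ : ℝ))^2 := by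
        have hi : (inner ℝ x₁ x₂ : ℝ) < 1 := by
          nlinarith [real_inner_le_norm x₁ x₂, hx₁'.1.1, hx₂'.1.1,
            norm_nonneg x₁, norm_nonneg x₂]
        have h1 : (0:ℝ) < 1 - ‖x₁‖^2 := by nlinarith [hx₁'.1.1, norm_nonneg x₁]
        have h2 : (0:ℝ) < 1 - ‖x₂‖^2 := by nlinarith [hx₂'.1.1, norm_nonneg x₂]
        have h3 : (0:ℝ) < (1 - (inner ℝ x₁ x₂ : ℝ))^2 := pow_pos (by linarith) 2
        positivity
      have hGmax := hmax (x₁, x₂)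
        (Set.mem_prod.mpr ⟨subset_closure hx₁F, subset_closure hx₂F⟩)
      simp only at hGmax
      have han1 : ‖a‖ < 1 := by
        rcases lt_or_eq_of_le han with h | h
        · exact h
        · exfalso
          have hz : 1 - ‖a‖^2 = 0 := by rw [h]; norm_num
          rw [hz] at hGmax
          simp only [zero_mul, zero_div] at hGmax
          linarith
      have hbn1 : ‖b‖ < 1 := by
        rcases lt_or_eq_of_le hbn with h | h
        · exact h
        · exfalso
          have hz : 1 - ‖b‖^2 = 0 := by rw [h]; norm_num
          rw [hz] at hGmax
          simp only [mul_zero, zero_div] at hGmax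
          linarith
      have hmax1 : ∀ x ∈ Face f₁,
          (1 - ‖x‖^2) * (1 - ‖b‖^2) / (1 - (inner ℝ x b : ℝ))^2 ≤
            (1 - ‖a‖^2) * (1 - ‖b‖^2) / (1 - (inner ℝ a b : ℝ))^2 := by
        intro x hx
        exact hmax (x, b) (Set.mem_prod.mpr ⟨subset_closure hx, hbK⟩)
      have hmax2 : ∀ x ∈ Face f₂,
          (1 - ‖x‖^2) * (1 - ‖a‖^2) / (1 - (inner ℝ x a : ℝ))^2 ≤
            (1 - ‖b‖^2) * (1 - ‖a‖^2) / (1 - (inner ℝ b a : ℝ))^2 := by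
        intro x hx
        have h := hmax (a, x) (Set.mem_prod.mpr ⟨haK, subset_closure hx⟩)
        simp only at h
        rw [real_inner_comm a x, real_inner_comm a b]
        rw [mul_comm ((1:ℝ) - ‖x‖^2) (1 - ‖a‖^2), mul_comm ((1:ℝ) - ‖b‖^2) (1 - ‖a‖^2)]
        exact h
      obtain ⟨τ, κ, hτpos, hκ, hsum, hbeq⟩ :=
        opt_foot n c hn hc P hP Face hFace f₁ x₁ hx₁F (fun g => hnonobtuse f₁ g)
          a b han1 hae hbn1 hball hmax1
      obtain ⟨τ', κ', hτ'pos, hκ', hsum', haeq⟩ :=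
        opt_foot n c hn hc P hP Face hFace f₂ x₂ hx₂F (fun g => hnonobtuse f₂ g)
          b a hbn1 hbe han1 haall hmax2
      have hκne : κ ≠ 0 := by
        intro h0
        simp only [h0, zero_smul, add_zero, zero_mul] at hbeq hsum
        rw [hsum, one_smul] at hbeq
        exact hcon ⟨a, haK, hbeq ▸ hbK⟩
      have hκ'ne : κ' ≠ 0 := by
        intro h0
        simp only [h0, zero_smul, add_zero, zero_mul] at haeq hsum'
        rw [hsum', one_smul] at haeq
        exact hcon ⟨a, haK, haeq ▸ hbK⟩
      have hcomb : (1 - τ*τ') • a = (τ'*κ) • n f₁ + κ' • n f₂ := by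
        have h5 : a = τ' • (τ • a + κ • n f₁) + κ' • n f₂ := by rw [← hbeq]; exact haeq
        have h6 : (1 - τ*τ') • a = a - (τ*τ') • a := by rw [sub_smul, one_smul]
        rw [h6]
        nth_rewrite 1 [h5]
        module
      have hscal : (1 - τ*τ') = (τ'*κ) * c f₁ + κ' * c f₂ := by
        linear_combination (-τ') * hsum - hsum'
      by_cases hδ : 1 - τ*τ' = 0
      · apply hdep
        refine ⟨-(τ'*κ)/κ', ?_, ?_⟩
        · rw [hδ, zero_smul] at hcomb
          have h7 : κ' • n f₂ = (-(τ'*κ)) • n f₁ := by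
            rw [neg_smul]
            exact eq_neg_of_add_eq_zero_right hcomb.symm
          have h8 : n f₂ = (κ'⁻¹ * (-(τ'*κ))) • n f₁ := by
            rw [mul_smul, ← h7, inv_smul_smul₀ hκ'ne]
          rw [h8, div_eq_inv_mul]
        · rw [hδ] at hscal
          field_simp
          linarith [hscal]
      · have hay : (inner ℝ a y : ℝ) = 1 := by
          have h9 : (inner ℝ ((1 - τ*τ') • a) y : ℝ)
              = (τ'*κ) * (inner ℝ (n f₁) y : ℝ) + κ' * (inner ℝ (n f₂) y : ℝ) := by
            rw [hcomb, inner_add_left, real_inner_smul_left, real_inner_smul_left]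
          rw [real_inner_smul_left, hye1, hye2] at h9
          have h8 : (1 - τ*τ') * ((inner ℝ a y : ℝ) - 1) = 0 := by
            linear_combination h9 - hscal
          rcases mul_eq_zero.mp h8 with h | h
          · exact absurd h hδ
          · linarith
        have hMA : MB ((a, 1) : E × ℝ) ((a, 1) : E × ℝ) < 0 := by
          rw [MB_mk]
          nlinarith [real_inner_self_eq_norm_sq a, han1, norm_nonneg a]
        have hperp : MB ((a, 1) : E × ℝ) ((y, 1) : E × ℝ) = 0 := by
          rw [MB_mk, hay]; ring
        have h10 : 0 ≤ MB ((y, 1) : E × ℝ) ((y, 1) : E × ℝ) := (MB_posdef hMA hperp).1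
        have h11 : MB ((y, 1) : E × ℝ) ((y, 1) : E × ℝ) = 0 := by
          rw [MB_mk] at h10 ⊢
          nlinarith [real_inner_self_eq_norm_sq y, hyn, norm_nonneg y]
        have h12 := (MB_posdef hMA hperp).2 h11
        have h13 := congrArg Prod.snd h12
        simp at h13
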